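/- arXiv:1305.6043 — 2 statements merged into one kernel-verified Lean document; each statement's English description precedes it below -/
import Mathlib

section
/- Fu's expected spectrum for the Kingman coalescent: E[ξ_i^{(n)}] = θ/i for i = 1, ..., n-1, for the unfolded site frequency spectrum of an n-sample with mutation rate θ/2 under the Kingman coalescent. -/
lemma fu_key (N i : ℕ) (hi : 1 ≤ i) :
    ∑ k ∈ Finset.Icc 2 (N + 2),
        ((N.choose (k - 2) : ℝ) / ((N + i).choose (k - 1) : ℝ) *
          (k : ℝ) * (2 / ((k : ℝ) * ((k : ℝ) - 1)))) = 2 / (i : ℝ) := by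
  have key : ∀ t ∈ Finset.range (N + 1),
      (N.choose (2 + t - 2) : ℝ) / ((N + i).choose (2 + t - 1) : ℝ) *
        ((2 + t : ℕ) : ℝ) * (2 / (((2 + t : ℕ) : ℝ) * (((2 + t : ℕ) : ℝ) - 1))) =
      2 * (N.choose t : ℝ) / ((i : ℝ) * ((N + i).choose t : ℝ)) -
      2 * (N.choose (t + 1) : ℝ) / ((i : ℝ) * ((N + i).choose (t + 1) : ℝ)) := by
    intro t ht
    simp only [Finset.mem_range] at ht
    have htN : t ≤ N := by omega
    have h1 : (N + i).choose t ≠ 0 := Nat.choose_pos (by omega) |>.ne'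
    have h2 : (N + i).choose (t + 1) ≠ 0 := Nat.choose_pos (by omega) |>.ne'
    have c1 : ((N + i).choose (t + 1) : ℝ) * ((t : ℝ) + 1) =
        ((N + i).choose t : ℝ) * ((N : ℝ) + (i : ℝ) - (t : ℝ)) := by
      have := Nat.choose_succ_right_eq (N + i) t
      have hc : (((N + i).choose (t + 1) * (t + 1) : ℕ) : ℝ)
          = (((N + i).choose t * (N + i - t) : ℕ) : ℝ) := congrArg (Nat.cast : ℕ → ℝ) this
      push_cast [Nat.cast_sub (show t ≤ N + i by omega)] at hc
      linarith [hc]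
    have c2 : (N.choose (t + 1) : ℝ) * ((t : ℝ) + 1) =
        (N.choose t : ℝ) * ((N : ℝ) - (t : ℝ)) := by
      have := Nat.choose_succ_right_eq N t
      have hc : ((N.choose (t + 1) * (t + 1) : ℕ) : ℝ)
          = ((N.choose t * (N - t) : ℕ) : ℝ) := congrArg (Nat.cast : ℕ → ℝ) this
      push_cast [Nat.cast_sub htN] at hc
      linarith [hc]
    have h3 : ((N + i).choose t : ℝ) ≠ 0 := Nat.cast_ne_zero.mpr h1
    have h4 : ((N + i).choose (t + 1) : ℝ) ≠ 0 := Nat.cast_ne_zero.mpr h2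
    have hi' : (i : ℝ) ≠ 0 := Nat.cast_ne_zero.mpr (by omega)
    have ht1 : ((t : ℝ) + 1) ≠ 0 := by positivity
    have ht2 : ((t : ℝ) + 2) ≠ 0 := by positivity
    simp only [show 2 + t - 2 = t from by omega, show 2 + t - 1 = t + 1 from by omega]
    push_cast
    rw [show (2+(t:ℝ)) * (2+(t:ℝ)-1) = (2+(t:ℝ))*((t:ℝ)+1) from by ring]
    field_simp
    linear_combination (-((N.choose t : ℝ))) * c1 +
      (((N+i).choose t : ℝ)) * c2
  rw [show Finset.Icc 2 (N + 2) = Finset.Ico 2 (N + 3) from by exact (Finset.Ico_add_one_right_eq_Icc (a := 2) (b := N + 2)).symm,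
    Finset.sum_Ico_eq_sum_range]
  simp only [show N + 3 - 2 = N + 1 from by omega]
  rw [Finset.sum_congr rfl key, Finset.sum_range_sub'
    (f := fun t => 2 * (N.choose t : ℝ) / ((i : ℝ) * ((N + i).choose t : ℝ)))]
  simp [Nat.choose_self, Nat.choose_succ_self]

/-- Fu's expected spectrum for the Kingman coalescent: with
p^{(n)}[k,i] = C(n-i-1,k-2)/C(n-1,k-1) and k E[T_k] = k ⋅ 2/(k(k-1)),
E[ξ_i^{(n)}] = (θ/2) ∑_{k=2}^{n-i+1} p^{(n)}[k,i] k ⋅ 2/(k(k-1)) = θ/i. -/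
theorem fu_expected_sfs (θ : ℝ) (n i : ℕ) (hn : 2 ≤ n) (hi : 1 ≤ i)
    (hin : i ≤ n - 1) :
    θ / 2 * ∑ k ∈ Finset.Icc 2 (n - i + 1),
        ((n - i - 1).choose (k - 2) : ℝ) / ((n - 1).choose (k - 1) : ℝ) *
          (k : ℝ) * (2 / ((k : ℝ) * ((k : ℝ) - 1))) =
      θ / (i : ℝ) := by
  obtain ⟨N, hN⟩ : ∃ N, n - i - 1 = N := ⟨_, rfl⟩
  have e1 : n - i + 1 = N + 2 := by omega
  have e2 : n - 1 = N + i := by omega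
  rw [hN, e1, e2, fu_key N i hi]
  have hi' : (i : ℝ) ≠ 0 := Nat.cast_ne_zero.mpr (by omega)
  field_simp
end

section
/- The combinatorial identity ∑_{k=2}^{n-i+1} (1/(k-1)) · C(n-i-1, k-2)/C(n-1, k-1) = 1/i holds for all integers n ≥ 2 and 1 ≤ i ≤ n-1. -/
lemma fu_aux (A0 A1 B0 B1 i j : ℝ) (hb0 : B0 ≠ 0) (hb1 : B1 ≠ 0) (hi0 : i ≠ 0)
    (hj0 : j + 1 ≠ 0) (a : ℝ)
    (h1 : B1 * (j + 1) = B0 * (a + i - j)) (h2 : A1 * (j + 1) = A0 * (a - j)) :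
    1 / (j + 1) * (A0 / B1) = A0 / (i * B0) - A1 / (i * B1) := by
  rw [div_mul_div_comm, one_mul, div_sub_div _ _ (mul_ne_zero hi0 hb0) (mul_ne_zero hi0 hb1),
    div_eq_div_iff (mul_ne_zero hj0 hb1) (mul_ne_zero (mul_ne_zero hi0 hb0) (mul_ne_zero hi0 hb1))]
  linear_combination (-(i * A0 * B1)) * h1 + (i * B0 * B1) * h2

lemma fu_term (a i j : ℕ) (hi : 1 ≤ i) (hj : j ≤ a) :
    (1 : ℝ) / ((j : ℝ) + 1) * ((a.choose j : ℝ) / ((a + i).choose (j + 1) : ℝ)) =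
      (a.choose j : ℝ) / ((i : ℝ) * ((a + i).choose j : ℝ)) -
        (a.choose (j + 1) : ℝ) / ((i : ℝ) * ((a + i).choose (j + 1) : ℝ)) := by
  have hb0 : ((a + i).choose j : ℝ) ≠ 0 := by
    have := Nat.choose_pos (show j ≤ a + i by omega); positivity
  have hb1 : ((a + i).choose (j + 1) : ℝ) ≠ 0 := by
    have := Nat.choose_pos (show j + 1 ≤ a + i by omega); positivity
  have hi0 : (i : ℝ) ≠ 0 := by positivity
  have hj0 : (j : ℝ) + 1 ≠ 0 := by positivity
  refine fu_aux _ _ _ _ _ _ hb0 hb1 hi0 hj0 (a : ℝ) ?_ ?_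
  · have h' := congrArg (Nat.cast (R := ℝ)) (Nat.choose_succ_right_eq (a + i) j)
    push_cast [Nat.cast_sub (show j ≤ a + i by omega)] at h'
    linarith
  · have h' := congrArg (Nat.cast (R := ℝ)) (Nat.choose_succ_right_eq a j)
    push_cast [Nat.cast_sub hj] at h'
    linarith

/-- The combinatorial identity ∑_{k=2}^{n-i+1} (1/(k-1)) C(n-i-1,k-2)/C(n-1,k-1) = 1/i
for all integers n ≥ 2 and 1 ≤ i ≤ n-1. -/
theorem fu_combinatorial_identity (n i : ℕ) (hn : 2 ≤ n) (hi : 1 ≤ i)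
    (hin : i ≤ n - 1) :
    ∑ k ∈ Finset.Icc 2 (n - i + 1),
        (1 : ℝ) / ((k : ℝ) - 1) *
          (((n - i - 1).choose (k - 2) : ℝ) / ((n - 1).choose (k - 1) : ℝ)) =
      1 / (i : ℝ) := by
  set a := n - i - 1 with ha
  have hb : n - 1 = a + i := by omega
  have hIcc : Finset.Icc 2 (n - i + 1) = Finset.Ico 2 (n - i + 2) := by
    rw [← Finset.Ico_add_one_right_eq_Icc]; rfl
  have hni : n - i + 2 - 2 = a + 1 := by omega
  rw [hIcc, Finset.sum_Ico_eq_sum_range, hni, hb]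
  have key : ∀ j ∈ Finset.range (a + 1),
      (1 : ℝ) / (((2 + j : ℕ) : ℝ) - 1) *
          ((a.choose (2 + j - 2) : ℝ) / ((a + i).choose (2 + j - 1) : ℝ)) =
        (a.choose j : ℝ) / ((i : ℝ) * ((a + i).choose j : ℝ)) -
          (a.choose (j + 1) : ℝ) / ((i : ℝ) * ((a + i).choose (j + 1) : ℝ)) := by
    intro j hj
    rw [Finset.mem_range] at hj
    have e1 : 2 + j - 2 = j := by omega
    have e2 : 2 + j - 1 = j + 1 := by omega
    rw [e1, e2]
    have := fu_term a i j hi (by omega)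
    convert this using 3
    push_cast; ring
  rw [Finset.sum_congr rfl key, Finset.sum_range_sub'
    (fun j => (a.choose j : ℝ) / ((i : ℝ) * ((a + i).choose j : ℝ)))]
  simp [Nat.choose_succ_self]
end
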